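/- Let G be a finite chordal graph, let T be a clique tree of G, let 𝒦 be a finite set of maximal cliques of G, and let C ∈ 𝒦. Suppose every member of 𝒦 ∖ {C} contains a vertex that is not in C, and the subgraph of G induced on (⋃𝒦) ∖ C is connected and nonempty. Then for every pair of distinct cliques K_1, K_2 ∈ 𝒦 ∖ {C}, the clique C does not lie on the unique path in T between the nodes K_1 and K_2. -/

import Mathlib

/-- A vertex is *simplicial* if its neighbors are pairwise adjacent. -/
def IsSimplicial {V : Type*} (G : SimpleGraph V) (v : V) : Prop :=
  ∀ x y, G.Adj v x → G.Adj v y → x ≠ y → G.Adj x y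

/-- A graph is *chordal* if it has no induced cycle of length at least 4,
i.e., no cycle graph on `n ≥ 4` vertices embeds in it as an induced subgraph. -/
def IsChordal {V : Type*} (G : SimpleGraph V) : Prop :=
  ∀ n : ℕ, 4 ≤ n → IsEmpty (SimpleGraph.cycleGraph n ↪g G)

/-- A *clique tree* of `G` is a tree `T` on the maximal cliques of `G` such that,
for every vertex `v`, the maximal cliques containing `v` induce a connected
subgraph of `T`. -/
def IsCliqueTree {V : Type*} (G : SimpleGraph V)
    (T : SimpleGraph {K : Finset V // Maximal G.IsClique (K : Set V)}) : Prop :=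
  T.IsTree ∧ ∀ v : V, (T.induce {K | v ∈ K.1}).Connected

section Aux
variable {V : Type*} [Fintype V] (G : SimpleGraph V)
  (T : SimpleGraph {K : Finset V // Maximal G.IsClique (K : Set V)})

lemma exists_maximal_clique_superset {s : Set V} (hs : G.IsClique s) :
    ∃ K : {K : Finset V // Maximal G.IsClique (K : Set V)}, s ⊆ K.1 := by
  obtain ⟨M, hsM, hM⟩ := Finite.exists_le_maximal hs
  have : Fintype ↑M := Fintype.ofFinite _
  refine ⟨⟨M.toFinset, by simpa using hM⟩, by simpa using hsM⟩

def induceHomT (s : Set {K : Finset V // Maximal G.IsClique (K : Set V)}) :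
    T.induce s →g T := ⟨Subtype.val, fun h => h⟩

set_option linter.unusedSectionVars false in
lemma walk_through_vertex (hT2 : ∀ v : V, (T.induce {K | v ∈ K.1}).Connected)
    (v : V) (Ka Kb : {K : Finset V // Maximal G.IsClique (K : Set V)})
    (ha : v ∈ Ka.1) (hb : v ∈ Kb.1) :
    ∃ q : T.Walk Ka Kb, ∀ K ∈ q.support, v ∈ K.1 := by
  obtain ⟨w⟩ := (hT2 v) ⟨Ka, ha⟩ ⟨Kb, hb⟩
  refine ⟨w.map (induceHomT G T _), ?_⟩
  intro K hK
  replace hK : K ∈ List.map (induceHomT G T {K | v ∈ K.1}) w.support := by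
    rw [← SimpleGraph.Walk.support_map]; exact hK
  rw [List.mem_map] at hK
  obtain ⟨⟨K', hK'⟩, _, rfl⟩ := hK
  exact hK'

lemma walk_avoiding (hT2 : ∀ v : V, (T.induce {K | v ∈ K.1}).Connected)
    (C : {K : Finset V // Maximal G.IsClique (K : Set V)})
    {S : Set V} (hS : ∀ v ∈ S, v ∉ C.1) :
    ∀ {a b : ↥S} (_ : (G.induce S).Walk a b)
      (Ka Kb : {K : Finset V // Maximal G.IsClique (K : Set V)})
      (_ : ↑a ∈ Ka.1) (_ : ↑b ∈ Kb.1), ∃ q : T.Walk Ka Kb, C ∉ q.support := by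
  intro a b w
  induction w with
  | @nil c =>
    intro Ka Kb ha hb
    obtain ⟨q, hq⟩ := walk_through_vertex G T hT2 _ Ka Kb ha hb
    exact ⟨q, fun h => hS _ c.2 (hq C h)⟩
  | @cons a a' b hadj w ih =>
    intro Ka Kb ha hb
    have hadj' : G.Adj ↑a ↑a' := hadj
    have hclique : G.IsClique {(a : V), (a' : V)} :=
      SimpleGraph.isClique_pair.2 fun _ => hadj'
    obtain ⟨K', hK'⟩ := exists_maximal_clique_superset G hclique
    have haK' : (a : V) ∈ K'.1 := by
      have := hK' (Set.mem_insert _ _); simpa using this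
    have ha'K' : (a' : V) ∈ K'.1 := by
      have := hK' (Set.mem_insert_of_mem _ rfl); simpa using this
    obtain ⟨q₁, hq₁⟩ := walk_through_vertex G T hT2 _ Ka K' ha haK'
    obtain ⟨q₂, hq₂⟩ := ih K' Kb ha'K' hb
    refine ⟨q₁.append q₂, ?_⟩
    intro h
    rw [SimpleGraph.Walk.mem_support_append_iff] at h
    rcases h with h | h
    · exact hS _ a.2 (hq₁ C h)
    · exact hq₂ h

end Aux

/-- Let `G` be a finite chordal graph, `T` a clique tree of `G`,
`𝒦` a set of maximal cliques of `G`, and `C ∈ 𝒦`.  If every member of `𝒦 \ {C}` has a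
vertex outside `C`, and the subgraph of `G` induced on `(⋃𝒦) \ C` is connected (hence
nonempty), then `C` does not lie on the unique path in `T` between any two distinct
members of `𝒦 \ {C}`. -/

theorem clique_not_on_path {V : Type*} [Fintype V]
    (G : SimpleGraph V) (hG : IsChordal G)
    (T : SimpleGraph {K : Finset V // Maximal G.IsClique (K : Set V)})
    (hT : IsCliqueTree G T)
    (𝒦 : Set {K : Finset V // Maximal G.IsClique (K : Set V)})
    (C : {K : Finset V // Maximal G.IsClique (K : Set V)}) (hC : C ∈ 𝒦)
    (hvert : ∀ K ∈ 𝒦, K ≠ C → ∃ v ∈ K.1, v ∉ C.1)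
    (hconn : (G.induce {v : V | (∃ K ∈ 𝒦, v ∈ K.1) ∧ v ∉ C.1}).Connected) :
    ∀ K₁ ∈ 𝒦, ∀ K₂ ∈ 𝒦, K₁ ≠ C → K₂ ≠ C → K₁ ≠ K₂ →
      ∀ p : T.Walk K₁ K₂, p.IsPath → C ∉ p.support := by
  classical
  intro K₁ h1 K₂ h2 hne1 hne2 _ p hp hCp
  obtain ⟨v₁, hv₁, hv₁C⟩ := hvert K₁ h1 hne1
  obtain ⟨v₂, hv₂, hv₂C⟩ := hvert K₂ h2 hne2
  set S : Set V := {v : V | (∃ K ∈ 𝒦, v ∈ K.1) ∧ v ∉ C.1} with hSdef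
  have hS : ∀ v ∈ S, v ∉ C.1 := fun v hv => hv.2
  have hv₁S : v₁ ∈ S := ⟨⟨K₁, h1, hv₁⟩, hv₁C⟩
  have hv₂S : v₂ ∈ S := ⟨⟨K₂, h2, hv₂⟩, hv₂C⟩
  obtain ⟨w⟩ := hconn ⟨v₁, hv₁S⟩ ⟨v₂, hv₂S⟩
  obtain ⟨q, hq⟩ := walk_avoiding G T hT.2 C hS w K₁ K₂ hv₁ hv₂
  have hq' : C ∉ q.toPath.1.support :=
    fun h => hq (SimpleGraph.Walk.support_toPath_subset q h)
  have heq : p = q.toPath.1 :=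
    ((hT.1.existsUnique_path K₁ K₂).unique hp q.toPath.2)
  rw [heq] at hCp
  exact hq' hCp
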